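/- Let k ≥ 2 and let T be the tree in which at each level exactly one distinguished vertex has k children and all other vertices have exactly one child (so γ(n) = nk − (n−1)). Then the forward shift S on H^p(T) is bounded with ‖S‖ = k^{1/p}. -/
import Mathlib


open scoped BigOperators
open Classical

/-- An infinite, locally finite rooted tree, presented combinatorially via a
parent function and a level (distance-to-root) function.  Every level is a
finite nonempty set of vertices. -/
structure HTree where
  V : Type
  root : V
  parent : V → V
  level : V → ℕ
  level_root : level root = 0
  root_of_level_zero : ∀ v, level v = 0 → v = root
  level_parent : ∀ v, v ≠ root → level (parent v) + 1 = level v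
  finite_level : ∀ n : ℕ, {v : V | level v = n}.Finite
  nonempty_level : ∀ n : ℕ, {v : V | level v = n}.Nonempty

namespace HTree

variable (T : HTree)

/-- The finite set of vertices at level `n`. -/
noncomputable def levelFinset (n : ℕ) : Finset T.V := (T.finite_level n).toFinset

/-- `γ(n)`, the number of vertices at level `n`. -/
noncomputable def gamma (n : ℕ) : ℕ := (T.levelFinset n).card

/-- The set of `m`-children of a vertex `v`. -/
noncomputable def nChildrenFinset (m : ℕ) (v : T.V) : Finset T.V :=
  (T.levelFinset (T.level v + m)).filter (fun w => T.parent^[m] w = v)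

/-- `γ(m,v)`, the number of `m`-children of `v`. -/
noncomputable def numNChildren (m : ℕ) (v : T.V) : ℕ := (T.nChildrenFinset m v).card

/-- The set of children of a vertex. -/
noncomputable def childrenFinset (v : T.V) : Finset T.V := T.nChildrenFinset 1 v

/-- `γ(1,v)`, the number of children of `v`. -/
noncomputable def numChildren (v : T.V) : ℕ := T.numNChildren 1 v

/-- `K(m,r)`, the maximal number of `m`-children among vertices at level `r`. -/
noncomputable def K (m r : ℕ) : ℕ := (T.levelFinset r).sup (fun v => T.numNChildren m v)

/-- `M_p^p(n,f)`, the `p`-th power of the `p`-th mean of `|f|` over level `n`. -/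
noncomputable def Mpp (p : ℝ) (f : T.V → ℂ) (n : ℕ) : ℝ :=
  (1 / (T.gamma n : ℝ)) * ∑ v ∈ T.levelFinset n, ‖f v‖ ^ p

/-- `M_p(n,f)`, the `p`-th mean of `|f|` over level `n`. -/
noncomputable def Mp (p : ℝ) (f : T.V → ℂ) (n : ℕ) : ℝ := (T.Mpp p f n) ^ (1 / p)

/-- Membership in the Hardy space `H^p(T)`. -/
def MemHp (p : ℝ) (f : T.V → ℂ) : Prop := ∃ C : ℝ, ∀ n : ℕ, T.Mp p f n ≤ C

/-- Membership in the little Hardy space `H^p_0(T)`. -/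
def MemHp0 (p : ℝ) (f : T.V → ℂ) : Prop :=
  Filter.Tendsto (T.Mp p f) Filter.atTop (nhds 0)

/-- The `H^p` norm, `sup_n M_p(n,f)`. -/
noncomputable def Hnorm (p : ℝ) (f : T.V → ℂ) : ℝ := ⨆ n : ℕ, T.Mp p f n

/-- The forward shift `(Sf)(v) = f(parent v)`, `(Sf)(root) = 0`. -/
noncomputable def S (f : T.V → ℂ) : T.V → ℂ := fun v => if v = T.root then 0 else f (T.parent v)

/-- The backward shift `(Bf)(v) = Σ_{w child of v} f(w)`. -/
noncomputable def B (f : T.V → ℂ) : T.V → ℂ := fun v => ∑ w ∈ T.childrenFinset v, f w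

/-- An operator `A` is bounded on the subspace described by `Mem`, with the
`H^p` norm. -/
def BoundedOn (A : (T.V → ℂ) → (T.V → ℂ)) (Mem : (T.V → ℂ) → Prop) (p : ℝ) : Prop :=
  ∃ C : ℝ, 0 ≤ C ∧ ∀ f, Mem f → Mem (A f) ∧ T.Hnorm p (A f) ≤ C * T.Hnorm p f

/-- The operator norm of `A` on the subspace described by `Mem`. -/
noncomputable def opNorm (A : (T.V → ℂ) → (T.V → ℂ)) (Mem : (T.V → ℂ) → Prop) (p : ℝ) : ℝ :=
  sInf {C : ℝ | 0 ≤ C ∧ ∀ f, Mem f → Mem (A f) ∧ T.Hnorm p (A f) ≤ C * T.Hnorm p f}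

/-- Hypercyclicity of an operator `A` on the subspace described by `Mem`. -/
def Hypercyclic (A : (T.V → ℂ) → (T.V → ℂ)) (Mem : (T.V → ℂ) → Prop) (p : ℝ) : Prop :=
  ∃ f, Mem f ∧ ∀ g, Mem g → ∀ ε : ℝ, 0 < ε →
    ∃ N : ℕ, T.Hnorm p (fun v => A^[N] f v - g v) < ε

end HTree


namespace HTree

lemma mem_levelFinset' {T : HTree} {v : T.V} {n : ℕ} :
    v ∈ T.levelFinset n ↔ T.level v = n := by
  simp [levelFinset, Set.Finite.mem_toFinset]

lemma levelFinset_zero' (T : HTree) : T.levelFinset 0 = {T.root} := by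
  ext v
  simp only [mem_levelFinset', Finset.mem_singleton]
  exact ⟨fun h => T.root_of_level_zero v h, fun h => h ▸ T.level_root⟩

lemma levelFinset_nonempty' (T : HTree) (n : ℕ) : (T.levelFinset n).Nonempty := by
  obtain ⟨v, hv⟩ := T.nonempty_level n
  exact ⟨v, mem_levelFinset'.mpr hv⟩

lemma gamma_pos' (T : HTree) (n : ℕ) : 0 < T.gamma n :=
  Finset.card_pos.mpr (T.levelFinset_nonempty' n)

lemma sum_S_pow' (T : HTree) (p : ℝ) (f : T.V → ℂ) (n : ℕ) :
    ∑ w ∈ T.levelFinset (n+1), ‖T.S f w‖ ^ p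
      = ∑ v ∈ T.levelFinset n, (T.numNChildren 1 v : ℝ) * ‖f v‖ ^ p := by
  have hmaps : ∀ w ∈ T.levelFinset (n+1), T.parent w ∈ T.levelFinset n := by
    intro w hw
    rw [mem_levelFinset'] at hw ⊢
    have hw0 : w ≠ T.root := by
      intro h; rw [h, T.level_root] at hw; exact Nat.succ_ne_zero n hw.symm
    have := T.level_parent w hw0
    omega
  rw [← Finset.sum_fiberwise_of_maps_to hmaps (fun w => ‖T.S f w‖ ^ p)]
  refine Finset.sum_congr rfl ?_
  intro v hv
  have hlv : T.level v = n := mem_levelFinset'.mp hv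
  have hfil : (T.levelFinset (n+1)).filter (fun w => T.parent w = v)
      = T.nChildrenFinset 1 v := by
    simp [nChildrenFinset, hlv, Function.iterate_one]
  calc ∑ w ∈ (T.levelFinset (n+1)).filter (fun w => T.parent w = v), ‖T.S f w‖ ^ p
      = ∑ w ∈ (T.levelFinset (n+1)).filter (fun w => T.parent w = v), ‖f v‖ ^ p := by
        refine Finset.sum_congr rfl fun w hw => ?_
        rw [Finset.mem_filter] at hw
        have hw0 : w ≠ T.root := by
          intro h
          have := mem_levelFinset'.mp hw.1
          rw [h, T.level_root] at this
          exact Nat.succ_ne_zero n this.symm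
        simp [S, hw0, hw.2]
    _ = (T.numNChildren 1 v : ℝ) * ‖f v‖ ^ p := by
        rw [Finset.sum_const, hfil, ← numNChildren, nsmul_eq_mul]

lemma Mpp_nonneg' (T : HTree) (p : ℝ) (f : T.V → ℂ) (n : ℕ) : 0 ≤ T.Mpp p f n := by
  apply mul_nonneg (by positivity)
  exact Finset.sum_nonneg fun v _ => Real.rpow_nonneg (norm_nonneg _) p

lemma Mp_nonneg' (T : HTree) (p : ℝ) (f : T.V → ℂ) (n : ℕ) : 0 ≤ T.Mp p f n :=
  Real.rpow_nonneg (T.Mpp_nonneg' p f n) _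

lemma Mpp_dirac' (T : HTree) (p : ℝ) (hp : 0 < p) (v : T.V) (m : ℕ) :
    T.Mpp p (fun w => if w = v then 1 else 0) m
      = if m = T.level v then 1 / (T.gamma m : ℝ) else 0 := by
  have hterm : ∀ w : T.V, ‖(fun w => if w = v then (1:ℂ) else 0) w‖ ^ p
      = if w = v then (1:ℝ) else 0 := by
    intro w; by_cases h : w = v <;> simp [h, Real.zero_rpow hp.ne', Real.one_rpow]
  rw [Mpp]
  simp only [hterm]
  rw [Finset.sum_ite_eq' (T.levelFinset m) v (fun _ => (1:ℝ))]
  by_cases h : m = T.level v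
  · rw [if_pos (mem_levelFinset'.mpr h.symm), if_pos h, mul_one]
  · rw [if_neg (fun hmem => h (mem_levelFinset'.mp hmem).symm), if_neg h, mul_zero]

end HTree

/-- on the tree with one distinguished `k`-branching vertex per level
(`γ(n) = nk − (n−1) = n(k−1)+1`, `K(1,n) = k`), the forward shift is bounded with
norm `k^{1/p}`. -/
theorem forward_shift_norm_example_k (T : HTree) (p : ℝ) (hp : 1 ≤ p)
    (k : ℕ) (hk : 2 ≤ k)
    (hgamma : ∀ n : ℕ, T.gamma n = n * (k - 1) + 1)
    (hK : ∀ n : ℕ, T.K 1 n = k) :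
    T.BoundedOn T.S (T.MemHp p) p ∧
      T.opNorm T.S (T.MemHp p) p = (k : ℝ) ^ (1 / p) := by

  classical
  have hp0 : (0:ℝ) < p := lt_of_lt_of_le one_pos hp
  have hip : (0:ℝ) < 1 / p := by positivity
  have hknn : (1:ℝ) ≤ (k:ℝ) := by exact_mod_cast Nat.one_le_of_lt hk
  have hkpos : (0:ℝ) < (k:ℝ) := lt_of_lt_of_le one_pos hknn
  set C0 : ℝ := (k:ℝ) ^ (1/p) with hC0def
  have hC0pos : 0 < C0 := Real.rpow_pos_of_pos hkpos _
  have hγmono : ∀ n, T.gamma n ≤ T.gamma (n+1) := by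
    intro n
    rw [hgamma, hgamma]
    have : n * (k-1) ≤ (n+1) * (k-1) := Nat.mul_le_mul_right _ (Nat.le_succ n)
    omega
  -- key pointwise estimate
  have key : ∀ (f : T.V → ℂ) (n : ℕ), T.Mpp p (T.S f) (n+1) ≤ (k:ℝ) * T.Mpp p f n := by
    intro f n
    rw [HTree.Mpp, T.sum_S_pow' p f n, HTree.Mpp]
    have hsum_nonneg : 0 ≤ ∑ v ∈ T.levelFinset n, ‖f v‖ ^ p :=
      Finset.sum_nonneg fun v _ => Real.rpow_nonneg (norm_nonneg _) p
    have h1 : ∑ v ∈ T.levelFinset n, (T.numNChildren 1 v : ℝ) * ‖f v‖ ^ p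
        ≤ ∑ v ∈ T.levelFinset n, (k:ℝ) * ‖f v‖ ^ p := by
      refine Finset.sum_le_sum fun v hv => ?_
      have hle : T.numNChildren 1 v ≤ k := hK n ▸ Finset.le_sup hv
      exact mul_le_mul_of_nonneg_right (by exact_mod_cast hle)
        (Real.rpow_nonneg (norm_nonneg _) p)
    calc (1 / (T.gamma (n+1) : ℝ)) * ∑ v ∈ T.levelFinset n, (T.numNChildren 1 v : ℝ) * ‖f v‖ ^ p
        ≤ (1 / (T.gamma (n+1) : ℝ)) * ∑ v ∈ T.levelFinset n, (k:ℝ) * ‖f v‖ ^ p :=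
          mul_le_mul_of_nonneg_left h1 (by positivity)
      _ = (k:ℝ) * ((1 / (T.gamma (n+1) : ℝ)) * ∑ v ∈ T.levelFinset n, ‖f v‖ ^ p) := by
          rw [← Finset.mul_sum]; ring
      _ ≤ (k:ℝ) * ((1 / (T.gamma n : ℝ)) * ∑ v ∈ T.levelFinset n, ‖f v‖ ^ p) := by
          refine mul_le_mul_of_nonneg_left ?_ hkpos.le
          refine mul_le_mul_of_nonneg_right ?_ hsum_nonneg
          refine one_div_le_one_div_of_le ?_ ?_
          · exact_mod_cast T.gamma_pos' n
          · exact_mod_cast hγmono n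
  have keyMp : ∀ (f : T.V → ℂ) (n : ℕ), T.Mp p (T.S f) (n+1) ≤ C0 * T.Mp p f n := by
    intro f n
    rw [HTree.Mp, HTree.Mp, hC0def, ← Real.mul_rpow hkpos.le (T.Mpp_nonneg' p f n)]
    exact Real.rpow_le_rpow (T.Mpp_nonneg' p _ _) (key f n) hip.le
  have hMp0 : ∀ f : T.V → ℂ, T.Mp p (T.S f) 0 = 0 := by
    intro f
    have h : T.Mpp p (T.S f) 0 = 0 := by
      rw [HTree.Mpp, T.levelFinset_zero']
      simp [HTree.S, Real.zero_rpow hp0.ne']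
    rw [HTree.Mp, h, Real.zero_rpow hip.ne']
  -- boundedness with constant C0
  have hbound : ∀ f, T.MemHp p f → T.MemHp p (T.S f) ∧ T.Hnorm p (T.S f) ≤ C0 * T.Hnorm p f := by
    rintro f ⟨Cf, hCf⟩
    have hbdd : BddAbove (Set.range (T.Mp p f)) := ⟨Cf, by rintro _ ⟨n, rfl⟩; exact hCf n⟩
    have hHnn : 0 ≤ T.Hnorm p f := le_trans (T.Mp_nonneg' p f 0) (le_ciSup hbdd 0)
    have hS : ∀ m, T.Mp p (T.S f) m ≤ C0 * T.Hnorm p f := by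
      intro m
      cases m with
      | zero => rw [hMp0 f]; positivity
      | succ n =>
        exact le_trans (keyMp f n) (mul_le_mul_of_nonneg_left (le_ciSup hbdd n) hC0pos.le)
    exact ⟨⟨C0 * T.Hnorm p f, hS⟩, ciSup_le hS⟩
  have memC0 : C0 ∈ {C : ℝ | 0 ≤ C ∧ ∀ f, T.MemHp p f → T.MemHp p (T.S f) ∧
      T.Hnorm p (T.S f) ≤ C * T.Hnorm p f} := ⟨hC0pos.le, hbound⟩
  refine ⟨⟨C0, hC0pos.le, hbound⟩, ?_⟩
  -- operator norm computation
  refine le_antisymm (csInf_le ⟨0, fun x hx => hx.1⟩ memC0) ?_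
  refine le_csInf ⟨C0, memC0⟩ ?_
  rintro C ⟨hCnn, hCprop⟩
  -- for each n, choose a vertex at level n with k children
  have hex : ∀ n : ℕ, ∃ v, T.level v = n ∧ T.numNChildren 1 v = k := by
    intro n
    obtain ⟨v, hv, hveq⟩ := Finset.exists_mem_eq_sup (T.levelFinset n)
      (T.levelFinset_nonempty' n) (fun v => T.numNChildren 1 v)
    exact ⟨v, HTree.mem_levelFinset'.mp hv, by rw [← hveq, ← HTree.K, hK n]⟩
  have hγpos : ∀ n, (0:ℝ) < (T.gamma n : ℝ) := fun n => by exact_mod_cast T.gamma_pos' n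
  have hCge : ∀ n : ℕ, ((k:ℝ) * (T.gamma n : ℝ) / (T.gamma (n+1) : ℝ)) ^ (1/p) ≤ C := by
    intro n
    obtain ⟨v, hvl, hvk⟩ := hex n
    set f : T.V → ℂ := fun w => if w = v then 1 else 0 with hfdef
    have hMppf : ∀ m, T.Mpp p f m = if m = n then 1 / (T.gamma m : ℝ) else 0 := by
      intro m; rw [hfdef, T.Mpp_dirac' p hp0 v m, hvl]
    have hMpf : ∀ m, T.Mp p f m ≤ (1 / (T.gamma n : ℝ)) ^ (1/p) := by
      intro m
      rw [HTree.Mp, hMppf m]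
      by_cases h : m = n
      · rw [if_pos h, h]
      · rw [if_neg h, Real.zero_rpow hip.ne']
        positivity
    have hmemf : T.MemHp p f := ⟨_, hMpf⟩
    obtain ⟨hmemSf, hHle⟩ := hCprop f hmemf
    have hHf : T.Hnorm p f ≤ (1 / (T.gamma n : ℝ)) ^ (1/p) := ciSup_le hMpf
    -- Mp of S f at level n+1
    have hMpSf : T.Mp p (T.S f) (n+1) = ((k:ℝ) / (T.gamma (n+1) : ℝ)) ^ (1/p) := by
      have hMpp : T.Mpp p (T.S f) (n+1) = (k:ℝ) / (T.gamma (n+1) : ℝ) := by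
        rw [HTree.Mpp, T.sum_S_pow' p f n]
        have hterm : ∀ w : T.V, (T.numNChildren 1 w : ℝ) * ‖f w‖ ^ p
            = if w = v then (T.numNChildren 1 w : ℝ) else 0 := by
          intro w
          by_cases h : w = v <;>
            simp [hfdef, h, Real.zero_rpow hp0.ne', Real.one_rpow]
        simp only [hterm]
        rw [Finset.sum_ite_eq' (T.levelFinset n) v (fun w => (T.numNChildren 1 w : ℝ)),
          if_pos (HTree.mem_levelFinset'.mpr hvl), hvk]
        ring
      rw [HTree.Mp, hMpp]
    obtain ⟨CS, hCS⟩ := hmemSf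
    have hbddS : BddAbove (Set.range (T.Mp p (T.S f))) := ⟨CS, by rintro _ ⟨m, rfl⟩; exact hCS m⟩
    have h1 : ((k:ℝ) / (T.gamma (n+1) : ℝ)) ^ (1/p) ≤ C * (1 / (T.gamma n : ℝ)) ^ (1/p) := by
      calc ((k:ℝ) / (T.gamma (n+1) : ℝ)) ^ (1/p) = T.Mp p (T.S f) (n+1) := hMpSf.symm
        _ ≤ T.Hnorm p (T.S f) := le_ciSup hbddS (n+1)
        _ ≤ C * T.Hnorm p f := hHle
        _ ≤ C * (1 / (T.gamma n : ℝ)) ^ (1/p) := mul_le_mul_of_nonneg_left hHf hCnn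
    have hYpos : (0:ℝ) < (1 / (T.gamma n : ℝ)) ^ (1/p) :=
      Real.rpow_pos_of_pos (div_pos one_pos (hγpos n)) _
    calc ((k:ℝ) * (T.gamma n : ℝ) / (T.gamma (n+1) : ℝ)) ^ (1/p)
        = (((k:ℝ) / (T.gamma (n+1) : ℝ)) / (1 / (T.gamma n : ℝ))) ^ (1/p) := by
          congr 1
          field_simp
        _ = ((k:ℝ) / (T.gamma (n+1) : ℝ)) ^ (1/p) / (1 / (T.gamma n : ℝ)) ^ (1/p) :=
          Real.div_rpow (by positivity) (by positivity) _
        _ ≤ C := by rw [div_le_iff₀ hYpos]; exact h1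
  -- the limit n → ∞
  set a : ℝ := (k:ℝ) - 1 with hadef
  have hk2 : (2:ℝ) ≤ (k:ℝ) := by exact_mod_cast hk
  have hapos : (0:ℝ) < a := by rw [hadef]; linarith
  have hcast : ∀ n : ℕ, ((T.gamma n : ℕ) : ℝ) = n * a + 1 := by
    intro n
    rw [hgamma n, hadef]
    push_cast [Nat.cast_sub (Nat.one_le_of_lt hk)]
    ring
  have hdenom : ∀ n : ℕ, ((T.gamma (n+1) : ℕ) : ℝ) = n * a + (k:ℝ) := by
    intro n
    rw [hcast (n+1), hadef]
    push_cast
    ring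
  have hatTop : Filter.Tendsto (fun n : ℕ => (n:ℝ) * a + (k:ℝ)) Filter.atTop Filter.atTop :=
    Filter.tendsto_atTop_add_const_right _ _
      (Filter.Tendsto.atTop_mul_const hapos tendsto_natCast_atTop_atTop)
  have hdenpos : ∀ n : ℕ, (0:ℝ) < (n:ℝ) * a + (k:ℝ) := by
    intro n; positivity
  have hfrac : Filter.Tendsto (fun n : ℕ => ((n:ℝ) * a + 1) / ((n:ℝ) * a + (k:ℝ)))
      Filter.atTop (nhds 1) := by
    have h0 : Filter.Tendsto (fun n : ℕ => ((k:ℝ) - 1) / ((n:ℝ) * a + (k:ℝ)))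
        Filter.atTop (nhds 0) := Filter.Tendsto.div_atTop tendsto_const_nhds hatTop
    have h1 : Filter.Tendsto (fun n : ℕ => 1 - ((k:ℝ) - 1) / ((n:ℝ) * a + (k:ℝ)))
        Filter.atTop (nhds 1) := by
      have := Filter.Tendsto.sub (tendsto_const_nhds (x := (1:ℝ))) h0
      simpa using this
    refine h1.congr fun n => ?_
    field_simp
    ring
  have hmul : Filter.Tendsto (fun n : ℕ => (k:ℝ) * (((n:ℝ) * a + 1) / ((n:ℝ) * a + (k:ℝ))))
      Filter.atTop (nhds (k:ℝ)) := by
    have := hfrac.const_mul (k:ℝ)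
    simpa using this
  have hrpow : Filter.Tendsto
      (fun n : ℕ => ((k:ℝ) * (((n:ℝ) * a + 1) / ((n:ℝ) * a + (k:ℝ)))) ^ (1/p))
      Filter.atTop (nhds ((k:ℝ) ^ (1/p))) :=
    ((Real.continuousAt_rpow_const (k:ℝ) (1/p) (Or.inl hkpos.ne')).tendsto).comp hmul
  have hfinal : Filter.Tendsto
      (fun n : ℕ => ((k:ℝ) * (T.gamma n : ℝ) / (T.gamma (n+1) : ℝ)) ^ (1/p))
      Filter.atTop (nhds ((k:ℝ) ^ (1/p))) := by
    refine hrpow.congr fun n => ?_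
    rw [hcast n, hdenom n, mul_div_assoc]
  exact le_of_tendsto hfinal (Filter.Eventually.of_forall hCge)
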